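/- Let F be a field, ι an index set, z a natural number, and v : ι → F^C a family of vectors such that every subfamily indexed by a finite set of at most 2z indices is linearly independent. Let S ⊆ ι be a finite set with |S| ≤ z, and for each e ∈ S let z_e ∈ F^n be a nonzero row vector. Let Y be the C×n matrix Y = Σ_{e∈S} v_e · z_e (sum of outer products of the column vector v_e with the row vector z_e). Let y_1, ..., y_η be columns of Y forming a basis of the column space of Y, and for each i ∈ {1,...,η} let T_i ⊆ ι be a finite set of minimum cardinality among all finite sets T' with y_i ∈ span{v_e : e ∈ T'}. Then ⋃_{i=1}^η T_i = S. -/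

import Mathlib

section helpers
variable {F ι : Type*} [Field F] [DecidableEq ι] {C : ℕ}

noncomputable def coeffs (s : Finset ι) (f : ι → F) : ι →₀ F :=
  ∑ e ∈ s, Finsupp.single e (f e)

lemma coeffs_apply (s : Finset ι) (f : ι → F) (e : ι) :
    coeffs s f e = if e ∈ s then f e else 0 := by
  classical
  simp [coeffs, Finsupp.finset_sum_apply, Finsupp.single_apply, Finset.sum_ite_eq']

lemma coeffs_supported (s : Finset ι) (f : ι → F) :
    coeffs s f ∈ Finsupp.supported F F (↑s : Set ι) :=
  Submodule.sum_mem _ fun e he => Finsupp.single_mem_supported F _ he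

lemma coeffs_lc (s : Finset ι) (f : ι → F) (v : ι → Fin C → F) :
    Finsupp.linearCombination F v (coeffs s f) = ∑ e ∈ s, f e • v e := by
  simp [coeffs, map_sum]

lemma coeffs_eq {z : ℕ} (v : ι → Fin C → F)
    (hind : ∀ s : Finset ι, s.card ≤ 2 * z → LinearIndependent F (fun i : s => v i.1))
    (s : Finset ι) (hs : s.card ≤ 2 * z) (f g : ι → F)
    (h : ∑ e ∈ s, f e • v e = ∑ e ∈ s, g e • v e) :
    ∀ e ∈ s, f e = g e := by
  have h0 : Finsupp.linearCombination F v (coeffs s f - coeffs s g) = 0 := by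
    simp [map_sub, coeffs_lc, h]
  have hsupp : coeffs s f - coeffs s g ∈ Finsupp.supported F F (↑s : Set ι) :=
    sub_mem (coeffs_supported s f) (coeffs_supported s g)
  have hz := ((linearIndepOn_iff (s := (↑s : Set ι))).mp (hind s hs)) _ hsupp h0
  intro e he
  have := DFunLike.congr_fun hz e
  simp [coeffs_apply, he, sub_eq_zero] at this
  exact this

end helpers

/-- correctness of LOCATE-ADVERSARY-RLNC. If every ≤ 2z of the
IRVs `v_e` are linearly independent, `Y = ∑_{e∈S} v_e · z_e` with `|S| ≤ z` and
all `z_e ≠ 0`, the columns `y_1,...,y_η` of `Y` form a basis of the column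
space of `Y`, and each `T_i` is a minimum-cardinality set with
`y_i ∈ span {v_e : e ∈ T_i}`, then `⋃ T_i = S`. -/
theorem stmt6 {F ι : Type*} [Field F] [DecidableEq ι] {C n z η : ℕ}
    (v : ι → (Fin C → F))
    (hind : ∀ s : Finset ι, s.card ≤ 2 * z →
      LinearIndependent F (fun i : s => v i.1))
    (S : Finset ι) (hS : S.card ≤ z)
    (zvec : ι → (Fin n → F)) (hzvec : ∀ e ∈ S, zvec e ≠ 0)
    (Y : Matrix (Fin C) (Fin n) F)
    (hY : Y = ∑ e ∈ S, Matrix.of (fun i j => v e i * zvec e j))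
    (y : Fin η → Fin n)
    (hbasis_indep : LinearIndependent F (fun i : Fin η => fun r => Y r (y i)))
    (hbasis_span :
      Submodule.span F (Set.range (fun i : Fin η => fun r => Y r (y i))) =
        Submodule.span F (Set.range (fun c : Fin n => fun r => Y r c)))
    (T : Fin η → Finset ι)
    (hTmem : ∀ i, (fun r => Y r (y i)) ∈ Submodule.span F (v '' ↑(T i)))
    (hTmin : ∀ i (T' : Finset ι),
      (fun r => Y r (y i)) ∈ Submodule.span F (v '' ↑T') → (T i).card ≤ T'.card) :
    Finset.univ.biUnion T = S := by
  classical
  have hcol : ∀ c, (fun r => Y r c) = ∑ e ∈ S, zvec e c • v e := by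
    intro c; funext r
    simp [hY, Matrix.sum_apply, Finset.sum_apply, mul_comm]
  set supp : Fin η → Finset ι := fun i => S.filter (fun e => zvec e (y i) ≠ 0) with hsuppdef
  have hsubS : ∀ i, supp i ⊆ S := fun i => Finset.filter_subset _ _
  have hTi : ∀ i, T i = supp i := by
    intro i
    have hcol2 : (fun r => Y r (y i)) = ∑ e ∈ supp i, zvec e (y i) • v e := by
      rw [hcol, hsuppdef]
      refine (Finset.sum_filter_of_ne ?_).symm
      intro e _ hne hz
      exact hne (by simp [hz])
    have hmem : (fun r => Y r (y i)) ∈ Submodule.span F (v '' ↑(supp i)) := by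
      rw [hcol2]
      exact Submodule.sum_mem _ fun e he =>
        Submodule.smul_mem _ _ (Submodule.subset_span ⟨e, he, rfl⟩)
    have hc1 : (T i).card ≤ (supp i).card := hTmin i _ hmem
    obtain ⟨l, hl, hlc⟩ :=
      (Finsupp.mem_span_image_iff_linearCombination F).mp (hTmem i)
    set a : ι →₀ F := coeffs S (fun e => zvec e (y i)) with ha
    have hlca : Finsupp.linearCombination F v a = (fun r => Y r (y i)) := by
      rw [ha, coeffs_lc, hcol]
    have h0 : Finsupp.linearCombination F v (a - l) = 0 := by
      rw [map_sub, hlca, hlc, sub_self]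
    have hsupported : a - l ∈ Finsupp.supported F F (↑(S ∪ T i) : Set ι) := by
      refine sub_mem ?_ ?_
      · exact Finsupp.supported_mono (by simp [Finset.coe_subset, Finset.subset_union_left])
          (coeffs_supported _ _)
      · exact Finsupp.supported_mono (by simp [Finset.coe_subset, Finset.subset_union_right])
          hl
    have hcard : (S ∪ T i).card ≤ 2 * z := by
      have h1 := Finset.card_union_le S (T i)
      have h2 : (supp i).card ≤ S.card := Finset.card_le_card (hsubS i)
      omega
    have hal : a = l := by
      have := ((linearIndepOn_iff (s := (↑(S ∪ T i) : Set ι))).mp (hind _ hcard)) _ hsupported h0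
      rwa [sub_eq_zero] at this
    have hsub2 : supp i ⊆ T i := by
      intro e he
      rw [hsuppdef] at he
      simp only [Finset.mem_filter] at he
      by_contra hnot
      have hl0 : l e = 0 := (Finsupp.mem_supported' F l).mp hl e hnot
      rw [← hal, ha, coeffs_apply] at hl0
      simp [he.1] at hl0
      exact he.2 hl0
    exact (Finset.eq_of_subset_of_card_le hsub2 hc1).symm
  ext e
  simp only [Finset.mem_biUnion, Finset.mem_univ, true_and, hTi, hsuppdef,
    Finset.mem_filter]
  constructor
  · rintro ⟨i, he, _⟩; exact he
  · intro he
    obtain ⟨c, hc⟩ : ∃ c, zvec e c ≠ 0 := by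
      by_contra h; push_neg at h; exact hzvec e he (funext h)
    have hmemc : (fun r => Y r c) ∈
        Submodule.span F (Set.range fun i : Fin η => fun r => Y r (y i)) := by
      rw [hbasis_span]; exact Submodule.subset_span ⟨c, rfl⟩
    obtain ⟨t, ht⟩ := (Submodule.mem_span_range_iff_exists_fun F).mp hmemc
    have hsum : ∑ e' ∈ S, (∑ j, t j * zvec e' (y j)) • v e' =
        ∑ e' ∈ S, zvec e' c • v e' := by
      rw [← hcol c, ← ht]
      simp only [hcol, Finset.smul_sum, smul_smul]
      rw [Finset.sum_comm]
      simp only [← Finset.sum_smul]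
    have key := coeffs_eq v hind S (by omega) _ _ hsum e he
    have hne : ∑ j, t j * zvec e (y j) ≠ 0 := by rw [key]; exact hc
    obtain ⟨j, _, hj⟩ := Finset.exists_ne_zero_of_sum_ne_zero hne
    exact ⟨j, he, fun h => hj (by rw [h, mul_zero])⟩
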